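/- arXiv:1811.07321 — 2 statements merged into one kernel-verified Lean document; each statement's English description precedes it below -/
import Mathlib

section
/- For all k ≥ 4 and all n ≥ 0, g_k(n) ≥ 21·h_k(n), where g_k(n) counts pairs of partitions of total size n each with at most k parts, and h_k(n) counts pairs (α,β) of partitions of total size n with α and β each having exactly k parts and the largest part of β appearing at least twice. -/
/-- The number of partitions of `n` with at most `k` parts. -/
noncomputable def atMostParts (k n : ℕ) : ℕ :=
  Nat.card {p : n.Partition // p.parts.card ≤ k}

/-- `gCount k n` is the number of pairs `(α, β)` of partitions, each with at most `k`
parts, with `|α| + |β| = n`. -/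
noncomputable def gCount (k n : ℕ) : ℕ :=
  ∑ i ∈ Finset.range (n + 1), atMostParts k i * atMostParts k (n - i)

/-- The number of partitions of `n` with exactly `k` parts. -/
noncomputable def exactParts (k n : ℕ) : ℕ :=
  Nat.card {p : n.Partition // p.parts.card = k}

/-- The number of partitions of `n` with exactly `k` parts whose largest part appears
at least twice. -/
noncomputable def exactPartsTopTwice (k n : ℕ) : ℕ :=
  Nat.card {p : n.Partition // p.parts.card = k ∧ 2 ≤ p.parts.count p.parts.sup}

/-- `hCount k n`: for `k ≥ 2`, the number of pairs `(α, β)` of partitions with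
`|α| + |β| = n` such that `α` and `β` each have exactly `k` parts and the largest part
of `β` appears at least twice; for `k = 1` it is `1` for `n ≥ 2` and `0` otherwise. -/
noncomputable def hCount (k n : ℕ) : ℕ :=
  if k = 1 then (if 2 ≤ n then 1 else 0)
  else ∑ i ∈ Finset.range (n + 1), exactParts k i * exactPartsTopTwice k (n - i)

open Finset Nat

namespace GH

lemma sum_map_pred (s : Multiset ℕ) (h : ∀ a ∈ s, 1 ≤ a) :
    (s.map (· - 1)).sum + s.card = s.sum := by
  induction s using Multiset.induction_on with
  | empty => simp
  | cons a s ih =>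
    simp only [Multiset.map_cons, Multiset.sum_cons, Multiset.card_cons]
    have ha : 1 ≤ a := h a (Multiset.mem_cons_self a s)
    have := ih (fun b hb => h b (Multiset.mem_cons_of_mem hb))
    omega

lemma sum_map_succ (s : Multiset ℕ) : (s.map (· + 1)).sum = s.sum + s.card := by
  induction s using Multiset.induction_on with
  | empty => simp
  | cons a s ih =>
    simp only [Multiset.map_cons, Multiset.sum_cons, Multiset.card_cons, ih]
    omega

/-- subtract 1 from every part, dropping zeros -/
def dparts (P : Multiset ℕ) : Multiset ℕ := (P.map (· - 1)).filter (0 < ·)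

lemma dparts_eq (P : Multiset ℕ) (hP : ∀ a ∈ P, 0 < a) :
    dparts P = (P.filter (1 < ·)).map (· - 1) := by
  unfold dparts
  rw [Multiset.filter_map]
  congr 1
  apply Multiset.filter_congr
  intro a ha
  have := hP a ha
  simp only [Function.comp_apply]
  constructor <;> intro h <;> omega

lemma count_one_filter (P : Multiset ℕ) (hP : ∀ a ∈ P, 0 < a) :
    P.filter (fun a => ¬ 1 < a) = Multiset.replicate (P.count 1) 1 := by
  have h1 : P.filter (fun a => ¬ 1 < a) = P.filter (· = 1) := by
    apply Multiset.filter_congr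
    intro a ha
    have := hP a ha
    constructor <;> intro h <;> omega
  rw [h1, Multiset.filter_eq']

lemma dparts_decomp (P : Multiset ℕ) (hP : ∀ a ∈ P, 0 < a) :
    (dparts P).map (· + 1) + Multiset.replicate (P.count 1) 1 = P := by
  rw [dparts_eq P hP]
  rw [Multiset.map_map]
  have h2 : ((P.filter (1 < ·)).map ((· + 1) ∘ (· - 1))) = P.filter (1 < ·) := by
    refine (Multiset.map_congr rfl fun a ha => ?_).trans (Multiset.map_id' _)
    rw [Multiset.mem_filter] at ha
    simp only [Function.comp_apply]
    omega
  rw [h2, ← count_one_filter P hP]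
  exact Multiset.filter_add_not (fun a => 1 < a) P

lemma dparts_sum (P : Multiset ℕ) (hP : ∀ a ∈ P, 0 < a) :
    (dparts P).sum + P.card = P.sum := by
  have h := congrArg Multiset.sum (dparts_decomp P hP)
  rw [Multiset.sum_add, sum_map_succ, Multiset.sum_replicate, smul_eq_mul, mul_one] at h
  have hc := congrArg Multiset.card (dparts_decomp P hP)
  simp only [Multiset.card_add, Multiset.card_map, Multiset.card_replicate] at hc
  omega

lemma dparts_card_le (P : Multiset ℕ) : (dparts P).card ≤ P.card := by
  unfold dparts
  calc ((P.map (· - 1)).filter (0 < ·)).card ≤ (P.map (· - 1)).card :=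
        Multiset.card_le_card (Multiset.filter_le _ _)
  _ = P.card := Multiset.card_map _ _

lemma dparts_pos (P : Multiset ℕ) : ∀ a ∈ dparts P, 0 < a := by
  intro a ha
  exact Multiset.of_mem_filter ha

/-- add 1 to every part and pad with `r` ones -/
def uparts (Q : Multiset ℕ) (r : ℕ) : Multiset ℕ := Q.map (· + 1) + Multiset.replicate r 1

lemma uparts_pos (Q : Multiset ℕ) (r : ℕ) : ∀ a ∈ uparts Q r, 0 < a := by
  intro a ha
  rcases Multiset.mem_add.1 ha with h | h
  · rcases Multiset.mem_map.1 h with ⟨b, _, rfl⟩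
    exact Nat.succ_pos b
  · rw [Multiset.eq_of_mem_replicate h]; omega

lemma uparts_sum (Q : Multiset ℕ) (r : ℕ) : (uparts Q r).sum = Q.sum + Q.card + r := by
  unfold uparts
  rw [Multiset.sum_add, sum_map_succ, Multiset.sum_replicate, smul_eq_mul, mul_one]

lemma uparts_card (Q : Multiset ℕ) (r : ℕ) : (uparts Q r).card = Q.card + r := by
  unfold uparts; simp

lemma dparts_uparts (Q : Multiset ℕ) (hQ : ∀ a ∈ Q, 0 < a) (r : ℕ) :
    dparts (uparts Q r) = Q := by
  unfold dparts uparts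
  rw [Multiset.map_add, Multiset.map_map, Multiset.filter_add]
  have h1 : (Q.map ((· - 1) ∘ (· + 1))) = Q := by
    refine (Multiset.map_congr rfl fun a _ => ?_).trans (Multiset.map_id' _)
    simp only [Function.comp_apply]
    omega
  have h2 : ((Multiset.replicate r 1).map (· - 1)) = Multiset.replicate r 0 := by
    rw [Multiset.map_replicate]
  rw [h1, h2]
  have h3 : (Multiset.replicate r 0).filter (0 < ·) = 0 := by
    rw [Multiset.filter_eq_nil]
    intro a ha
    rw [Multiset.eq_of_mem_replicate ha]
    omega
  rw [h3, add_zero, Multiset.filter_eq_self.2 hQ]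

lemma uparts_dparts (P : Multiset ℕ) (hP : ∀ a ∈ P, 0 < a) :
    uparts (dparts P) (P.count 1) = P := dparts_decomp P hP

lemma dparts_card_count (P : Multiset ℕ) (hP : ∀ a ∈ P, 0 < a) :
    (dparts P).card + P.count 1 = P.card := by
  have hc := congrArg Multiset.card (dparts_decomp P hP)
  simp only [Multiset.card_add, Multiset.card_map, Multiset.card_replicate] at hc
  exact hc


lemma msup_mem (s : Multiset ℕ) (h : s ≠ 0) : s.sup ∈ s := by
  induction s using Multiset.induction_on with
  | empty => exact absurd rfl h
  | cons a t ih =>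
    rw [Multiset.sup_cons]
    rcases eq_or_ne t 0 with rfl | ht
    · simp
    · rcases le_total a t.sup with h1 | h1
      · rw [sup_eq_right.2 h1]
        exact Multiset.mem_cons_of_mem (ih ht)
      · rw [sup_eq_left.2 h1]
        exact Multiset.mem_cons_self a t

lemma sup_dparts (P : Multiset ℕ) (hP : ∀ a ∈ P, 0 < a) (h2 : 2 ≤ P.sup) :
    (dparts P).sup = P.sup - 1 := by
  have hne : P ≠ 0 := by
    rintro rfl
    simp at h2
  have hmem : P.sup ∈ P := msup_mem P hne
  apply le_antisymm
  · rw [Multiset.sup_le]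
    intro b hb
    rw [dparts_eq P hP] at hb
    rcases Multiset.mem_map.1 hb with ⟨a, ha, rfl⟩
    have : a ≤ P.sup := Multiset.le_sup (Multiset.mem_filter.1 ha).1
    omega
  · apply Multiset.le_sup
    rw [dparts_eq P hP]
    exact Multiset.mem_map_of_mem _ (Multiset.mem_filter.2 ⟨hmem, by omega⟩)

lemma count_dparts (P : Multiset ℕ) (hP : ∀ a ∈ P, 0 < a) (h2 : 2 ≤ P.sup) :
    (dparts P).count (P.sup - 1) = P.count P.sup := by
  rw [dparts_eq P hP, Multiset.count_map]
  rw [Multiset.filter_filter]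
  rw [Multiset.count_eq_card_filter_eq]
  congr 1
  apply Multiset.filter_congr
  intro a ha
  have := hP a ha
  constructor
  · rintro ⟨h3, h4⟩; omega
  · intro h3; omega

lemma dparts_ne_zero (P : Multiset ℕ) (hP : ∀ a ∈ P, 0 < a) (h2 : 2 ≤ P.sup) :
    dparts P ≠ 0 := by
  have hne : P ≠ 0 := by rintro rfl; simp at h2
  have hmem : P.sup ∈ P := msup_mem P hne
  intro h
  rw [dparts_eq P hP] at h
  have : P.sup - 1 ∈ (P.filter (1 < ·)).map (· - 1) :=
    Multiset.mem_map_of_mem _ (Multiset.mem_filter.2 ⟨hmem, by omega⟩)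
  rw [h] at this
  simp at this

lemma sup_le_one (P : Multiset ℕ) (hP : ∀ a ∈ P, 0 < a) (h2 : P.sup ≤ 1) :
    P = Multiset.replicate P.card 1 := by
  apply Multiset.eq_replicate_card.2
  intro a ha
  have := hP a ha
  have := Multiset.le_sup ha
  omega


/-- The key bijection: partitions of `m+k` with exactly `k` parts are in bijection with
partitions of `m` with at most `k` parts. -/
def equivDown (m k : ℕ) :
    {p : Nat.Partition (m + k) // p.parts.card = k} ≃
      {q : Nat.Partition m // q.parts.card ≤ k} where
  toFun x :=
    ⟨⟨dparts x.1.parts, fun hi => dparts_pos _ _ hi, by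
        have h := dparts_sum x.1.parts (fun a ha => x.1.parts_pos ha)
        rw [x.2, x.1.parts_sum] at h
        omega⟩, by
      have := dparts_card_le x.1.parts
      rw [x.2] at this
      exact this⟩
  invFun y :=
    ⟨⟨uparts y.1.parts (k - y.1.parts.card), fun hi => uparts_pos _ _ _ hi, by
        rw [uparts_sum, y.1.parts_sum]
        have := y.2
        omega⟩, by
      show (uparts y.1.parts (k - y.1.parts.card)).card = k
      rw [uparts_card]
      have := y.2
      omega⟩
  left_inv := by
    rintro ⟨p, hp⟩
    apply Subtype.ext
    apply Nat.Partition.ext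
    show uparts (dparts p.parts) (k - (dparts p.parts).card) = p.parts
    have hpos : ∀ a ∈ p.parts, 0 < a := fun a ha => p.parts_pos ha
    have h1 := dparts_card_count p.parts hpos
    rw [hp] at h1
    have : k - (dparts p.parts).card = p.parts.count 1 := by omega
    rw [this]
    exact uparts_dparts p.parts hpos
  right_inv := by
    rintro ⟨q, hq⟩
    apply Subtype.ext
    apply Nat.Partition.ext
    show dparts (uparts q.parts (k - q.parts.card)) = q.parts
    exact dparts_uparts q.parts (fun a ha => q.parts_pos ha) _

lemma equivDown_parts (m k : ℕ) (x : {p : Nat.Partition (m + k) // p.parts.card = k}) :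
    ((equivDown m k) x).1.parts = dparts x.1.parts := rfl

lemma card_le_sum (s : Multiset ℕ) (h : ∀ a ∈ s, 0 < a) : s.card ≤ s.sum := by
  induction s using Multiset.induction_on with
  | empty => simp
  | cons a t ih =>
    simp only [Multiset.card_cons, Multiset.sum_cons]
    have := h a (Multiset.mem_cons_self a t)
    have := ih (fun b hb => h b (Multiset.mem_cons_of_mem hb))
    omega

lemma partition_card_le (n : ℕ) (p : Nat.Partition n) : p.parts.card ≤ n := by
  calc p.parts.card ≤ p.parts.sum := card_le_sum _ (fun a ha => p.parts_pos ha)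
  _ = n := p.parts_sum



noncomputable def Wfun (k t : ℕ) : ℕ :=
  Nat.card {q : Nat.Partition t //
    q.parts.card ≤ k ∧ (q.parts = 0 ∨ 2 ≤ q.parts.count q.parts.sup)}

lemma cond_transfer (m k : ℕ) (hk : 2 ≤ k) (x : {p : Nat.Partition (m + k) // p.parts.card = k}) :
    (2 ≤ x.1.parts.count x.1.parts.sup) ↔
      (((equivDown m k) x).1.parts = 0 ∨
        2 ≤ ((equivDown m k) x).1.parts.count ((equivDown m k) x).1.parts.sup) := by
  rw [equivDown_parts]
  have hpos : ∀ a ∈ x.1.parts, 0 < a := fun a ha => x.1.parts_pos ha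
  have hcard : x.1.parts.card = k := x.2
  rcases le_or_gt 2 x.1.parts.sup with h2 | h2
  · rw [sup_dparts _ hpos h2, count_dparts _ hpos h2]
    constructor
    · exact fun h => Or.inr h
    · rintro (h | h)
      · exact absurd h (dparts_ne_zero _ hpos h2)
      · exact h
  · constructor
    · intro _
      left
      rw [dparts_eq _ hpos]
      have hf : x.1.parts.filter (1 < ·) = 0 := by
        rw [Multiset.filter_eq_nil]
        intro a ha
        have := Multiset.le_sup ha
        omega
      rw [hf]
      simp
    · intro _
      have hne : x.1.parts ≠ 0 := by
        intro h0
        rw [h0] at hcard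
        simp at hcard
        omega
      have hsup1 : x.1.parts.sup ∈ x.1.parts := msup_mem _ hne
      have hs1 : x.1.parts.sup = 1 := by
        have := hpos _ hsup1
        omega
      have hrep : x.1.parts = Multiset.replicate x.1.parts.card 1 :=
        sup_le_one _ hpos (by omega)
      rw [hs1]
      calc (2:ℕ) ≤ k := hk
      _ = x.1.parts.count 1 := by
          conv_rhs => rw [hrep]
          rw [Multiset.count_replicate, if_pos rfl]
          exact hcard.symm

/-- conditioned version of the key bijection -/
noncomputable def equivDownCond (m k : ℕ) (hk : 2 ≤ k) :
    {p : Nat.Partition (m + k) // p.parts.card = k ∧ 2 ≤ p.parts.count p.parts.sup} ≃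
      {q : Nat.Partition m //
        q.parts.card ≤ k ∧ (q.parts = 0 ∨ 2 ≤ q.parts.count q.parts.sup)} :=
  ((Equiv.subtypeSubtypeEquivSubtypeInter _ _).symm.trans
    (((equivDown m k).subtypeEquiv (cond_transfer m k hk)))).trans
    (Equiv.subtypeSubtypeEquivSubtypeInter _ _)

lemma exactParts_eq (k m : ℕ) : exactParts k (m + k) = atMostParts k m :=
  Nat.card_congr (equivDown m k)

lemma exactParts_zero {k i : ℕ} (h : i < k) : exactParts k i = 0 := by
  have : IsEmpty {p : Nat.Partition i // p.parts.card = k} :=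
    ⟨fun x => by
      have := partition_card_le i x.1
      rw [x.2] at this
      omega⟩
  exact Nat.card_of_isEmpty

lemma exactPartsTT_eq (k m : ℕ) (hk : 2 ≤ k) :
    exactPartsTopTwice k (m + k) = Wfun k m :=
  Nat.card_congr (equivDownCond m k hk)

lemma exactPartsTT_zero {k i : ℕ} (h : i < k) : exactPartsTopTwice k i = 0 := by
  have : IsEmpty {p : Nat.Partition i //
      p.parts.card = k ∧ 2 ≤ p.parts.count p.parts.sup} :=
    ⟨fun x => by
      have := partition_card_le i x.1
      rw [x.2.1] at this
      omega⟩
  exact Nat.card_of_isEmpty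


/-- split card ≤ k+1 into card ≤ k and card = k+1 -/
def splitEquiv (n k : ℕ) :
    {p : Nat.Partition n // p.parts.card ≤ k + 1} ≃
      {p : Nat.Partition n // p.parts.card ≤ k} ⊕ {p : Nat.Partition n // p.parts.card = k + 1} where
  toFun x :=
    if h : x.1.parts.card = k + 1 then Sum.inr ⟨x.1, h⟩
    else Sum.inl ⟨x.1, by have := x.2; omega⟩
  invFun y :=
    match y with
    | Sum.inl z => ⟨z.1, by have := z.2; omega⟩
    | Sum.inr z => ⟨z.1, le_of_eq z.2⟩
  left_inv x := by
    by_cases h : x.1.parts.card = k + 1 <;> simp [h]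
  right_inv y := by
    match y with
    | Sum.inl z =>
      have h : ¬ (z.1.parts.card = k + 1) := by have := z.2; omega
      simp [h]
    | Sum.inr z =>
      simp [z.2]

lemma atMost_split (k s : ℕ) :
    atMostParts (k+1) s = atMostParts k s + exactParts (k+1) s := by
  unfold atMostParts exactParts
  rw [Nat.card_congr (splitEquiv s k), Nat.card_sum]

def splitEquivW (n k : ℕ) :
    {p : Nat.Partition n //
      p.parts.card ≤ k + 1 ∧ (p.parts = 0 ∨ 2 ≤ p.parts.count p.parts.sup)} ≃
      {p : Nat.Partition n //
        p.parts.card ≤ k ∧ (p.parts = 0 ∨ 2 ≤ p.parts.count p.parts.sup)} ⊕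
      {p : Nat.Partition n // p.parts.card = k + 1 ∧ 2 ≤ p.parts.count p.parts.sup} where
  toFun x :=
    if h : x.1.parts.card = k + 1 then
      Sum.inr ⟨x.1, h, by
        rcases x.2.2 with h0 | h2
        · exfalso
          rw [h0] at h
          simp at h
        · exact h2⟩
    else Sum.inl ⟨x.1, by have := x.2.1; omega, x.2.2⟩
  invFun y :=
    match y with
    | Sum.inl z => ⟨z.1, by have := z.2.1; omega, z.2.2⟩
    | Sum.inr z => ⟨z.1, le_of_eq z.2.1, Or.inr z.2.2⟩
  left_inv x := by
    by_cases h : x.1.parts.card = k + 1 <;> simp [h]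
  right_inv y := by
    match y with
    | Sum.inl z =>
      have h : ¬ (z.1.parts.card = k + 1) := by have := z.2.1; omega
      simp [h]
    | Sum.inr z =>
      simp [z.2.1]

lemma W_split (k t : ℕ) :
    Wfun (k+1) t = Wfun k t + exactPartsTopTwice (k+1) t := by
  unfold Wfun exactPartsTopTwice
  rw [Nat.card_congr (splitEquivW t k), Nat.card_sum]

lemma atMost_rec (k s : ℕ) :
    atMostParts (k+1) s = atMostParts k s +
      (if k + 1 ≤ s then atMostParts (k+1) (s - (k+1)) else 0) := by
  rw [atMost_split]
  congr 1
  rcases le_or_gt (k+1) s with h | h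
  · rw [if_pos h]
    obtain ⟨m, rfl⟩ := Nat.exists_eq_add_of_le h
    rw [add_comm (k+1) m, exactParts_eq]
    congr 1
    omega
  · rw [if_neg (by omega), exactParts_zero h]

lemma W_rec (k t : ℕ) (hk : 1 ≤ k) :
    Wfun (k+1) t = Wfun k t +
      (if k + 1 ≤ t then Wfun (k+1) (t - (k+1)) else 0) := by
  rw [W_split]
  congr 1
  rcases le_or_gt (k+1) t with h | h
  · rw [if_pos h]
    obtain ⟨m, rfl⟩ := Nat.exists_eq_add_of_le h
    rw [add_comm (k+1) m, exactPartsTT_eq _ _ (by omega)]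
    congr 1
    omega
  · rw [if_neg (by omega), exactPartsTT_zero h]

instance uniquePartitionZero : Unique (Nat.Partition 0) where
  default := ⟨0, by simp, by simp⟩
  uniq p := by
    apply Nat.Partition.ext
    have h0 : p.parts.sum = 0 := p.parts_sum
    rw [Multiset.sum_eq_zero_iff] at h0
    show p.parts = 0
    rw [Multiset.eq_zero_iff_forall_notMem]
    intro a ha
    have := p.parts_pos ha
    have := h0 a ha
    omega

lemma atMost_k_zero (k : ℕ) : atMostParts k 0 = 1 := by
  unfold atMostParts
  have : Nonempty {p : Nat.Partition 0 // p.parts.card ≤ k} :=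
    ⟨⟨default, by simp [default]⟩⟩
  exact Nat.card_unique

lemma Wfun_k_zero (k : ℕ) : Wfun k 0 = 1 := by
  unfold Wfun
  have : Nonempty {q : Nat.Partition 0 //
      q.parts.card ≤ k ∧ (q.parts = 0 ∨ 2 ≤ q.parts.count q.parts.sup)} :=
    ⟨⟨default, by simp [default], Or.inl (by simp [default])⟩⟩
  exact Nat.card_unique

lemma atMost_zero (s : ℕ) : atMostParts 0 s = if s = 0 then 1 else 0 := by
  rcases eq_or_ne s 0 with rfl | hs
  · rw [if_pos rfl, atMost_k_zero]
  · rw [if_neg hs]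
    unfold atMostParts
    have : IsEmpty {p : Nat.Partition s // p.parts.card ≤ 0} :=
      ⟨fun x => by
        have hc : x.1.parts.card = 0 := by have := x.2; omega
        rw [Multiset.card_eq_zero] at hc
        have := x.1.parts_sum
        rw [hc] at this
        simp at this
        exact hs this.symm⟩
    exact Nat.card_of_isEmpty

lemma partition_singleton (s : ℕ) (p : Nat.Partition (s+1)) (h : p.parts.card ≤ 1) :
    p.parts = {s+1} := by
  have hsum := p.parts_sum
  interval_cases hc : p.parts.card
  · rw [Multiset.card_eq_zero] at hc
    rw [hc] at hsum
    simp at hsum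
  · rw [Multiset.card_eq_one] at hc
    obtain ⟨a, ha⟩ := hc
    rw [ha] at hsum ⊢
    simp at hsum
    rw [hsum]

lemma atMost_one (s : ℕ) : atMostParts 1 s = 1 := by
  rcases Nat.eq_zero_or_pos s with rfl | hs
  · exact atMost_k_zero 1
  obtain ⟨t, rfl⟩ := Nat.exists_eq_add_of_le hs
  rw [add_comm] at *
  unfold atMostParts
  have hne : Nonempty {p : Nat.Partition (t+1) // p.parts.card ≤ 1} :=
    ⟨⟨⟨{t+1}, by intro i hi; simp at hi; omega, by simp⟩, by simp⟩⟩
  have hsub : Subsingleton {p : Nat.Partition (t+1) // p.parts.card ≤ 1} := by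
    constructor
    rintro ⟨p, hp⟩ ⟨q, hq⟩
    apply Subtype.ext
    apply Nat.Partition.ext
    rw [partition_singleton t p hp, partition_singleton t q hq]
  exact Nat.card_unique

lemma Wfun_one (t : ℕ) : Wfun 1 t = if t = 0 then 1 else 0 := by
  rcases eq_or_ne t 0 with rfl | ht
  · rw [if_pos rfl, Wfun_k_zero]
  · rw [if_neg ht]
    unfold Wfun
    have : IsEmpty {q : Nat.Partition t //
        q.parts.card ≤ 1 ∧ (q.parts = 0 ∨ 2 ≤ q.parts.count q.parts.sup)} := by
      constructor
      rintro ⟨q, hcard, hcond⟩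
      rcases hcond with h0 | h2
      · have := q.parts_sum
        rw [h0] at this
        simp at this
        exact ht this.symm
      · have := Multiset.count_le_card q.parts.sup q.parts
        omega
    exact Nat.card_of_isEmpty


/-- generic shifted-sum lemma -/
lemma sum_shift (f : ℕ → ℕ) (c s : ℕ) :
    (∑ u ∈ range (s+1), if c ≤ u then f (u - c) else 0) =
      if c ≤ s then ∑ v ∈ range (s - c + 1), f v else 0 := by
  rcases le_or_gt c s with h | h
  · rw [if_pos h]
    rw [Finset.range_eq_Ico, ← Finset.sum_Ico_consecutive _ (Nat.zero_le c) (by omega : c ≤ s + 1)]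
    have h1 : ∑ u ∈ Finset.Ico 0 c, (if c ≤ u then f (u - c) else 0) = 0 := by
      apply Finset.sum_eq_zero
      intro u hu
      rw [Finset.mem_Ico] at hu
      rw [if_neg (by omega)]
    have h2 : ∑ u ∈ Finset.Ico c (s+1), (if c ≤ u then f (u - c) else 0) =
        ∑ v ∈ range (s - c + 1), f v := by
      rw [Finset.sum_Ico_eq_sum_range]
      have hr : s + 1 - c = s - c + 1 := by omega
      rw [hr, Finset.range_eq_Ico]
      apply Finset.sum_congr rfl
      intro v _
      rw [if_pos (by omega)]
      congr 1
      omega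
    rw [h1, h2, zero_add, Finset.range_eq_Ico]
  · rw [if_neg (by omega)]
    apply Finset.sum_eq_zero
    intro u hu
    rw [Finset.mem_range] at hu
    rw [if_neg (by omega)]

lemma sum_shift2 (F : ℕ → ℕ) (c n : ℕ) :
    (∑ i ∈ range (n+1), if i + c ≤ n then F i else 0) =
      if c ≤ n then ∑ i ∈ range (n - c + 1), F i else 0 := by
  rcases le_or_gt c n with h | h
  · rw [if_pos h]
    rw [Finset.range_eq_Ico, ← Finset.sum_Ico_consecutive _ (Nat.zero_le (n - c + 1))
      (by omega : n - c + 1 ≤ n + 1)]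
    have h1 : ∑ i ∈ Finset.Ico 0 (n - c + 1), (if i + c ≤ n then F i else 0) =
        ∑ i ∈ Finset.Ico 0 (n - c + 1), F i := by
      apply Finset.sum_congr rfl
      intro i hi
      rw [Finset.mem_Ico] at hi
      rw [if_pos (by omega)]
    have h2 : ∑ i ∈ Finset.Ico (n - c + 1) (n + 1), (if i + c ≤ n then F i else 0) = 0 := by
      apply Finset.sum_eq_zero
      intro i hi
      rw [Finset.mem_Ico] at hi
      rw [if_neg (by omega)]
    rw [h1, h2, add_zero, Finset.range_eq_Ico]
  · rw [if_neg (by omega)]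
    apply Finset.sum_eq_zero
    intro i hi
    rw [Finset.mem_range] at hi
    rw [if_neg (by omega)]

/-- partial sums of `Wfun` -/
noncomputable def SW (k s : ℕ) : ℕ := ∑ u ∈ range (s+1), Wfun k u

lemma SW_rec (k s : ℕ) (hk : 1 ≤ k) :
    SW (k+1) s = SW k s + (if k + 1 ≤ s then SW (k+1) (s - (k+1)) else 0) := by
  unfold SW
  have h1 : ∑ u ∈ range (s+1), Wfun (k+1) u =
      ∑ u ∈ range (s+1), (Wfun k u + (if k + 1 ≤ u then Wfun (k+1) (u - (k+1)) else 0)) := by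
    apply Finset.sum_congr rfl
    intro u _
    exact W_rec k u hk
  rw [h1, Finset.sum_add_distrib, sum_shift]

lemma atMost_eq_SW (k : ℕ) (hk : 1 ≤ k) : ∀ s, atMostParts k s = SW k s := by
  induction k with
  | zero => omega
  | succ k ih =>
    rcases Nat.eq_zero_or_pos k with rfl | hk1
    · intro s
      rw [atMost_one]
      unfold SW
      rw [Finset.sum_congr rfl (fun u _ => Wfun_one u)]
      rw [Finset.sum_ite_eq' (range (s+1)) 0 (fun _ => 1)]
      rw [if_pos (Finset.mem_range.2 (by omega))]
    · intro s
      induction s using Nat.strong_induction_on with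
      | _ s ihs =>
        rw [atMost_rec, SW_rec k s hk1, ih hk1 s]
        congr 1
        rcases le_or_gt (k+1) s with h | h
        · rw [if_pos h, if_pos h, ihs _ (by omega)]
        · rw [if_neg (by omega), if_neg (by omega)]

lemma atMost_mono (k s : ℕ) (hk : 1 ≤ k) : atMostParts k s ≤ atMostParts k (s+1) := by
  rw [atMost_eq_SW k hk s, atMost_eq_SW k hk (s+1)]
  unfold SW
  exact Finset.sum_le_sum_of_subset (Finset.range_subset_range.2 (by omega))


lemma sum_range_guard (f : ℕ → ℕ) (m n : ℕ) (h : m ≤ n) :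
    ∑ i ∈ range (m+1), f i = ∑ i ∈ range (n+1), (if i ≤ m then f i else 0) := by
  have h1 : ∑ i ∈ range (m+1), f i = ∑ i ∈ range (m+1), (if i ≤ m then f i else 0) := by
    apply Finset.sum_congr rfl
    intro i hi
    rw [Finset.mem_range] at hi
    rw [if_pos (by omega)]
  rw [h1]
  apply Finset.sum_subset (Finset.range_subset_range.2 (by omega))
  intro x _ hx
  rw [Finset.mem_range, not_lt] at hx
  rw [if_neg (by omega)]

noncomputable def conv (f g : ℕ → ℕ) (n : ℕ) : ℕ :=
  ∑ i ∈ range (n+1), f i * g (n - i)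

noncomputable def Ck (k m : ℕ) : ℕ := conv (atMostParts k) (Wfun k) m

lemma conv_rec_right (f g g0 : ℕ → ℕ) (c : ℕ)
    (hg : ∀ t, g t = g0 t + (if c ≤ t then g (t - c) else 0)) (n : ℕ) :
    conv f g n = conv f g0 n + (if c ≤ n then conv f g (n - c) else 0) := by
  unfold conv
  have h1 : ∀ i ∈ range (n+1), f i * g (n - i) =
      f i * g0 (n - i) + (if i + c ≤ n then f i * g ((n - c) - i) else 0) := by
    intro i hi
    rw [Finset.mem_range] at hi
    rw [hg (n - i), Nat.mul_add]
    congr 1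
    rcases le_or_gt (i + c) n with h | h
    · rw [if_pos (by omega : c ≤ n - i), if_pos h]
      congr 2
      omega
    · rw [if_neg (by omega), if_neg (by omega), Nat.mul_zero]
  rw [Finset.sum_congr rfl h1, Finset.sum_add_distrib]
  congr 1
  exact sum_shift2 (fun i => f i * g ((n - c) - i)) c n

lemma conv_rec_left (f f0 g : ℕ → ℕ) (c : ℕ)
    (hf : ∀ s, f s = f0 s + (if c ≤ s then f (s - c) else 0)) (n : ℕ) :
    conv f g n = conv f0 g n + (if c ≤ n then conv f g (n - c) else 0) := by
  unfold conv
  have h1 : ∀ i ∈ range (n+1), f i * g (n - i) =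
      f0 i * g (n - i) + (if c ≤ i then f (i - c) * g ((n - c) - (i - c)) else 0) := by
    intro i hi
    rw [Finset.mem_range] at hi
    rw [hf i, Nat.add_mul]
    congr 1
    rcases le_or_gt c i with h | h
    · rw [if_pos h, if_pos h]
      congr 2
      omega
    · rw [if_neg (by omega), if_neg (by omega), Nat.zero_mul]
  rw [Finset.sum_congr rfl h1, Finset.sum_add_distrib]
  congr 1
  rw [sum_shift (fun j => f j * g ((n - c) - j)) c n]

/-- `gCount` is the partial-sum sequence of `Ck`. -/
lemma gCount_eq (k n : ℕ) (hk : 1 ≤ k) :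
    gCount k n = ∑ m ∈ range (n+1), Ck k m := by
  unfold gCount Ck conv
  have lhs : ∑ i ∈ range (n + 1), atMostParts k i * atMostParts k (n - i) =
      ∑ i ∈ range (n+1), ∑ u ∈ range (n - i + 1), atMostParts k i * Wfun k u := by
    apply Finset.sum_congr rfl
    intro i _
    rw [atMost_eq_SW k hk (n - i)]
    unfold SW
    rw [Finset.mul_sum]
  rw [lhs]
  have rhs : ∑ m ∈ range (n+1), ∑ i ∈ range (m+1), atMostParts k i * Wfun k (m - i) =
      ∑ i ∈ range (n+1), ∑ m ∈ range (n+1),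
        (if i ≤ m then atMostParts k i * Wfun k (m - i) else 0) := by
    rw [← Finset.sum_comm]
    apply Finset.sum_congr rfl
    intro m hm
    rw [Finset.mem_range] at hm
    exact sum_range_guard (fun i => atMostParts k i * Wfun k (m - i)) m n (by omega)
  rw [rhs]
  apply Finset.sum_congr rfl
  intro i hi
  rw [Finset.mem_range] at hi
  have h2 : ∀ m ∈ range (n+1), (if i ≤ m then atMostParts k i * Wfun k (m - i) else 0) =
      (if i ≤ m then atMostParts k i * Wfun k (m - i) else 0) := fun _ _ => rfl
  calc ∑ u ∈ range (n - i + 1), atMostParts k i * Wfun k u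
      = if i ≤ n then ∑ v ∈ range (n - i + 1), atMostParts k i * Wfun k v else 0 := by
        rw [if_pos (by omega)]
  _ = ∑ m ∈ range (n+1), (if i ≤ m then atMostParts k i * Wfun k (m - i) else 0) := by
        rw [sum_shift (fun v => atMostParts k i * Wfun k v) i n]

/-- `hCount`-style sum equals a shifted `Ck`. -/
lemma hSum_eq (k n : ℕ) (hk : 2 ≤ k) :
    (∑ i ∈ range (n + 1), exactParts k i * exactPartsTopTwice k (n - i)) =
      if 2*k ≤ n then Ck k (n - 2*k) else 0 := by
  rcases le_or_gt (2*k) n with h | h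
  · rw [if_pos h]
    have key : ∀ i ∈ range (n+1), exactParts k i * exactPartsTopTwice k (n - i) =
        (if k ≤ i then
          (if (i - k) + 2*k ≤ n then
            atMostParts k (i - k) * Wfun k ((n - 2*k) - (i - k)) else 0) else 0) := by
      intro i hi
      rw [Finset.mem_range] at hi
      rcases le_or_gt k i with h1 | h1
      · rcases le_or_gt (i + k) n with h2 | h2
        · rw [if_pos h1, if_pos (by omega)]
          have e1 : exactParts k i = atMostParts k (i - k) := by
            conv_lhs => rw [show i = (i - k) + k by omega]
            exact exactParts_eq k (i - k)
          have e2 : exactPartsTopTwice k (n - i) = Wfun k ((n - 2*k) - (i - k)) := by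
            conv_lhs => rw [show n - i = ((n - 2*k) - (i - k)) + k by omega]
            exact exactPartsTT_eq k _ hk
          rw [e1, e2]
        · rw [if_pos h1, if_neg (by omega)]
          rw [exactPartsTT_zero (show n - i < k by omega), Nat.mul_zero]
      · rw [if_neg (by omega), exactParts_zero h1, Nat.zero_mul]
    rw [Finset.sum_congr rfl key]
    rw [sum_shift (fun j => if j + 2*k ≤ n then
      atMostParts k j * Wfun k ((n - 2*k) - j) else 0) k n]
    rw [if_pos (by omega)]
    have h3 : ∀ j ∈ range (n - k + 1),
        (if j + 2*k ≤ n then atMostParts k j * Wfun k ((n - 2*k) - j) else 0) =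
        (if j + k ≤ n - k then atMostParts k j * Wfun k ((n - 2*k) - j) else 0) := by
      intro j hj
      rcases le_or_gt (j + 2*k) n with h4 | h4
      · rw [if_pos h4, if_pos (by omega)]
      · rw [if_neg (by omega), if_neg (by omega)]
    rw [Finset.sum_congr rfl h3]
    rw [sum_shift2 (fun j => atMostParts k j * Wfun k ((n - 2*k) - j)) k (n - k)]
    rw [if_pos (by omega)]
    unfold Ck conv
    have h5 : n - k - k = n - 2*k := by omega
    rw [h5]
  · rw [if_neg (by omega)]
    apply Finset.sum_eq_zero
    intro i hi
    rw [Finset.mem_range] at hi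
    rcases le_or_gt k i with h1 | h1
    · rw [exactPartsTT_zero (show n - i < k by omega), Nat.mul_zero]
    · rw [exactParts_zero h1, Nat.zero_mul]

/-- the key cumulative-sum step lemma -/
lemma step_cumsum (c c' : ℕ → ℕ) (κ J : ℕ) (hκpos : 1 ≤ κ)
    (hrec : ∀ m, c' m = c m + (if κ ≤ m then c' (m - κ) else 0))
    (hbase : ∀ M, 21 * c M ≤ ∑ m ∈ range (M+J+1), c m) :
    ∀ M, 21 * c' M ≤ ∑ m ∈ range (M+J+2), c' m := by
  intro M
  induction M using Nat.strong_induction_on with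
  | _ M ih =>
    have hF : ∑ m ∈ range (M+J+2), c' m = ∑ m ∈ range (M+J+2), c m +
        (if κ ≤ M+J+1 then ∑ m ∈ range (M+J+1-κ+1), c' m else 0) := by
      have : ∀ m ∈ range (M+J+2), c' m = c m + (if κ ≤ m then c' (m - κ) else 0) :=
        fun m _ => hrec m
      rw [Finset.sum_congr rfl this, Finset.sum_add_distrib, sum_shift c' κ (M+J+1)]
    have hcM : 21 * c M ≤ ∑ m ∈ range (M+J+2), c m := by
      calc 21 * c M ≤ ∑ m ∈ range (M+J+1), c m := hbase M
      _ ≤ ∑ m ∈ range (M+J+2), c m :=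
        Finset.sum_le_sum_of_subset (Finset.range_subset_range.2 (by omega))
    rw [hrec M, Nat.mul_add]
    rcases le_or_gt κ M with hκ | hκ
    · rw [if_pos hκ]
      have h1 := ih (M - κ) (by omega)
      have h2 : M - κ + J + 2 = M + J + 1 - κ + 1 := by omega
      rw [h2] at h1
      rw [hF, if_pos (by omega)]
      omega
    · rw [if_neg (by omega), Nat.mul_zero, Nat.add_zero]
      have hnn : 0 ≤ (if κ ≤ M+J+1 then ∑ m ∈ range (M+J+1-κ+1), c' m else 0) := Nat.zero_le _
      omega


/-! ### computable mirror sequences -/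

def v1 : ℕ → ℕ := fun _ => 1
def v2 : ℕ → ℕ := fun n => n + 1
def v3 : ℕ → ℕ
  | 0 => 1
  | 1 => 2
  | (n+2) => v2 (n+2) + v3 n
def v4 : ℕ → ℕ
  | 0 => 1
  | 1 => 2
  | (n+2) => v3 (n+2) + v4 n
def v5 : ℕ → ℕ
  | 0 => 1
  | 1 => 2
  | 2 => 5
  | (n+3) => v4 (n+3) + v5 n
def v6 : ℕ → ℕ
  | 0 => 1
  | 1 => 2
  | 2 => 5
  | (n+3) => v5 (n+3) + v6 n
def v7 : ℕ → ℕ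
  | 0 => 1
  | 1 => 2
  | 2 => 5
  | 3 => 10
  | (n+4) => v6 (n+4) + v7 n
def v8 : ℕ → ℕ
  | 0 => 1
  | 1 => 2
  | 2 => 5
  | 3 => 10
  | (n+4) => v7 (n+4) + v8 n

example : v8 8 = 149 := by decide

lemma conv_atMost_zero (f : ℕ → ℕ) (n : ℕ) : conv f (atMostParts 0) n = f n := by
  unfold conv
  rw [Finset.sum_eq_single n]
  · rw [Nat.sub_self, atMost_zero, if_pos rfl, Nat.mul_one]
  · intro b hb hbn
    rw [Finset.mem_range] at hb
    rw [atMost_zero, if_neg (by omega), Nat.mul_zero]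
  · intro h
    exact absurd (Finset.mem_range.2 (by omega)) h

lemma ueq2 : ∀ n, conv (atMostParts 1) (atMostParts 1) n = v2 n := by
  intro n
  induction n using Nat.strong_induction_on with
  | _ n ih =>
    have hr := conv_rec_right (atMostParts 1) (atMostParts 1) (atMostParts 0) 1
      (atMost_rec 0) n
    rw [conv_atMost_zero] at hr
    rw [hr, atMost_one]
    rcases n with _ | n
    · simp [v2]
    · rw [if_pos (by omega), Nat.add_sub_cancel, ih n (by omega)]
      simp only [v2]
      omega

lemma ueq3 : ∀ n, conv (atMostParts 1) (atMostParts 2) n = v3 n := by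
  intro n
  induction n using Nat.strong_induction_on with
  | _ n ih =>
    have hr := conv_rec_right (atMostParts 1) (atMostParts 2) (atMostParts 1) 2
      (atMost_rec 1) n
    rw [hr, ueq2 n]
    rcases n with _ | _ | n
    · simp [v3, v2]
    · simp [v3, v2]
    · rw [if_pos (by omega), show n + 2 - 2 = n by omega, ih n (by omega)]
      show v2 (n+2) + v3 n = v3 (n+2)
      rfl

lemma ueq4 : ∀ n, conv (atMostParts 2) (atMostParts 2) n = v4 n := by
  intro n
  induction n using Nat.strong_induction_on with
  | _ n ih =>
    have hr := conv_rec_left (atMostParts 2) (atMostParts 1) (atMostParts 2) 2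
      (atMost_rec 1) n
    rw [hr, ueq3 n]
    rcases n with _ | _ | n
    · simp [v4, v3]
    · simp [v4, v3, v2]
    · rw [if_pos (by omega), show n + 2 - 2 = n by omega, ih n (by omega)]
      show v3 (n+2) + v4 n = v4 (n+2)
      rfl

lemma ueq5 : ∀ n, conv (atMostParts 2) (atMostParts 3) n = v5 n := by
  intro n
  induction n using Nat.strong_induction_on with
  | _ n ih =>
    have hr := conv_rec_right (atMostParts 2) (atMostParts 3) (atMostParts 2) 3
      (atMost_rec 2) n
    rw [hr, ueq4 n]
    rcases n with _ | _ | _ | n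
    · simp [v5, v4]
    · simp [v5, v4, v3, v2]
    · simp [v5, v4, v3, v2]
    · rw [if_pos (by omega), show n + 3 - 3 = n by omega, ih n (by omega)]
      show v4 (n+3) + v5 n = v5 (n+3)
      rfl

lemma ueq6 : ∀ n, conv (atMostParts 3) (atMostParts 3) n = v6 n := by
  intro n
  induction n using Nat.strong_induction_on with
  | _ n ih =>
    have hr := conv_rec_left (atMostParts 3) (atMostParts 2) (atMostParts 3) 3
      (atMost_rec 2) n
    rw [hr, ueq5 n]
    rcases n with _ | _ | _ | n
    · simp [v6, v5]
    · simp [v6, v5, v4, v3, v2]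
    · simp [v6, v5, v4, v3, v2]
    · rw [if_pos (by omega), show n + 3 - 3 = n by omega, ih n (by omega)]
      show v5 (n+3) + v6 n = v6 (n+3)
      rfl

lemma ueq7 : ∀ n, conv (atMostParts 3) (atMostParts 4) n = v7 n := by
  intro n
  induction n using Nat.strong_induction_on with
  | _ n ih =>
    have hr := conv_rec_right (atMostParts 3) (atMostParts 4) (atMostParts 3) 4
      (atMost_rec 3) n
    rw [hr, ueq6 n]
    rcases n with _ | _ | _ | _ | n
    · simp [v7, v6]
    · simp [v7, v6, v5, v4, v3, v2]
    · simp [v7, v6, v5, v4, v3, v2]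
    · simp [v7, v6, v5, v4, v3, v2]
    · rw [if_pos (by omega), show n + 4 - 4 = n by omega, ih n (by omega)]
      show v6 (n+4) + v7 n = v7 (n+4)
      rfl

lemma ueq8 : ∀ n, conv (atMostParts 4) (atMostParts 4) n = v8 n := by
  intro n
  induction n using Nat.strong_induction_on with
  | _ n ih =>
    have hr := conv_rec_left (atMostParts 4) (atMostParts 3) (atMostParts 4) 4
      (atMost_rec 3) n
    rw [hr, ueq7 n]
    rcases n with _ | _ | _ | _ | n
    · simp [v8, v7]
    · simp [v8, v7, v6, v5, v4, v3, v2]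
    · simp [v8, v7, v6, v5, v4, v3, v2]
    · simp [v8, v7, v6, v5, v4, v3, v2]
    · rw [if_pos (by omega), show n + 4 - 4 = n by omega, ih n (by omega)]
      show v7 (n+4) + v8 n = v8 (n+4)
      rfl


/-- Generic induction step along the cumulative-sum chain. -/
lemma chain_pos (v w : ℕ → ℕ) (s Mv Mw B : ℕ) (hs : 1 ≤ s) (h9 : 9 ≤ Mv)
    (hB1 : Mv + s ≤ B) (hB2 : Mw ≤ B)
    (hrec : ∀ n, v (n + s) = w (n + s) + v n)
    (hw : ∀ n, Mw ≤ n → 21 * w (n - 8) ≤ w n + 21 * w (n - 9))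
    (hbase : ∀ n, Mv ≤ n → n < B → 21 * v (n - 8) ≤ v n + 21 * v (n - 9)) :
    ∀ n, Mv ≤ n → 21 * v (n - 8) ≤ v n + 21 * v (n - 9) := by
  intro n
  induction n using Nat.strong_induction_on with
  | _ n ih =>
    intro hn
    rcases lt_or_ge n B with hlt | hge
    · exact hbase n hn hlt
    · obtain ⟨m, rfl⟩ : ∃ m, n = m + s + 9 := ⟨n - s - 9, by omega⟩
      have e1 : m + s + 9 - 8 = m + s + 1 := by omega
      have e2 : m + s + 9 - 9 = m + s := by omega
      rw [e1, e2]
      have hv1 : v (m + s + 9) = w (m + s + 9) + v (m + 9) := by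
        have := hrec (m + 9)
        rw [show m + 9 + s = m + s + 9 by omega] at this
        exact this
      have hv2 : v (m + s + 1) = w (m + s + 1) + v (m + 1) := by
        have := hrec (m + 1)
        rw [show m + 1 + s = m + s + 1 by omega] at this
        exact this
      have hv3 : v (m + s) = w (m + s) + v m := hrec m
      have hIH : 21 * v (m + 9 - 8) ≤ v (m + 9) + 21 * v (m + 9 - 9) :=
        ih (m + 9) (by omega) (by omega)
      rw [show m + 9 - 8 = m + 1 by omega, show m + 9 - 9 = m by omega] at hIH
      have hW := hw (m + s + 9) (by omega)
      rw [e1, e2] at hW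
      calc 21 * v (m + s + 1) = 21 * w (m + s + 1) + 21 * v (m + 1) := by
            rw [hv2]; ring
      _ ≤ (w (m + s + 9) + 21 * w (m + s)) + (v (m + 9) + 21 * v m) := by
            exact Nat.add_le_add hW hIH
      _ = v (m + s + 9) + 21 * v (m + s) := by
            rw [hv1, hv3]; ring

lemma S1 : ∀ n, 9 ≤ n → 21 * v1 (n - 8) ≤ v1 n + 21 * v1 (n - 9) := by
  intro n _
  simp [v1]

lemma S2 : ∀ n, 20 ≤ n → 21 * v2 (n - 8) ≤ v2 n + 21 * v2 (n - 9) := by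
  apply chain_pos v2 v1 1 20 9 21 (by omega) (by omega) (by omega) (by omega)
  · intro n; simp [v1, v2]; omega
  · exact S1
  · intro n h1 h2
    interval_cases n <;> decide

lemma S3 : ∀ n, 29 ≤ n → 21 * v3 (n - 8) ≤ v3 n + 21 * v3 (n - 9) := by
  apply chain_pos v3 v2 2 29 20 31 (by omega) (by omega) (by omega) (by omega)
  · intro n; rfl
  · exact S2
  · intro n h1 h2
    interval_cases n <;> decide

lemma S4 : ∀ n, 37 ≤ n → 21 * v4 (n - 8) ≤ v4 n + 21 * v4 (n - 9) := by
  apply chain_pos v4 v3 2 37 29 39 (by omega) (by omega) (by omega) (by omega)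
  · intro n; rfl
  · exact S3
  · intro n h1 h2
    interval_cases n <;> decide

lemma S5 : ∀ n, 41 ≤ n → 21 * v5 (n - 8) ≤ v5 n + 21 * v5 (n - 9) := by
  apply chain_pos v5 v4 3 41 37 44 (by omega) (by omega) (by omega) (by omega)
  · intro n; rfl
  · exact S4
  · intro n h1 h2
    interval_cases n <;> decide

lemma S6 : ∀ n, 44 ≤ n → 21 * v6 (n - 8) ≤ v6 n + 21 * v6 (n - 9) := by
  apply chain_pos v6 v5 3 44 41 47 (by omega) (by omega) (by omega) (by omega)
  · intro n; rfl
  · exact S5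
  · intro n h1 h2
    interval_cases n <;> decide

lemma S7 : ∀ n, 9 ≤ n → 21 * v7 (n - 8) ≤ v7 n + 21 * v7 (n - 9) := by
  apply chain_pos v7 v6 4 9 44 44 (by omega) (by omega) (by omega) (by omega)
  · intro n; rfl
  · exact S6
  · intro n h1 h2
    interval_cases n <;> decide

lemma S8 : ∀ n, 9 ≤ n → 21 * v8 (n - 8) ≤ v8 n + 21 * v8 (n - 9) := by
  apply chain_pos v8 v7 4 9 9 13 (by omega) (by omega) (by omega) (by omega)
  · intro n; rfl
  · exact S7
  · intro n h1 h2
    interval_cases n <;> decide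



lemma conv_gCount (k n : ℕ) : conv (atMostParts k) (atMostParts k) n = gCount k n := rfl

lemma gCount_eq' (k n : ℕ) (hk : 1 ≤ k) :
    conv (atMostParts k) (atMostParts k) n = ∑ m ∈ range (n+1), Ck k m := by
  rw [conv_gCount]
  exact gCount_eq k n hk

lemma v8_value : 21 * v8 0 ≤ v8 8 := by decide

lemma star4 : ∀ M, 21 * Ck 4 M ≤ ∑ m ∈ range (M + 2*4 + 1), Ck 4 m := by
  intro M
  have hsum : ∑ m ∈ range (M + 2*4 + 1), Ck 4 m = v8 (M + 8) := by
    rw [show M + 2*4 + 1 = (M + 8) + 1 by omega, ← gCount_eq' 4 (M+8) (by omega), ueq8]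
  rw [hsum]
  rcases M with _ | M
  · have h0 : Ck 4 0 = v8 0 := by
      have := gCount_eq' 4 0 (by omega)
      rw [ueq8] at this
      simpa using this.symm
    rw [h0]
    exact v8_value
  · have hdec : v8 (M + 1) = v8 M + Ck 4 (M + 1) := by
      rw [← ueq8, ← ueq8, gCount_eq' 4 (M+1) (by omega), gCount_eq' 4 M (by omega),
        Finset.sum_range_succ]
    have hS := S8 (M + 1 + 8) (by omega)
    rw [show M + 1 + 8 - 8 = M + 1 by omega, show M + 1 + 8 - 9 = M by omega] at hS
    rw [show M + 1 + 8 = M + 9 by omega] at hS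
    rw [show M + 1 + 8 = M + 9 by omega]
    omega


theorem star (k : ℕ) (hk : 4 ≤ k) :
    ∀ M, 21 * Ck k M ≤ ∑ m ∈ range (M + 2*k + 1), Ck k m := by
  induction k with
  | zero => omega
  | succ k ih =>
    rcases Nat.lt_or_ge k 4 with h4 | h4
    · -- k + 1 = 4
      have hk3 : k = 3 := by omega
      subst hk3
      intro M
      have := star4 M
      rw [show M + 2*(3+1) + 1 = M + 2*4 + 1 by omega]
      exact this
    · have hstar := ih (by omega)
      set Y : ℕ → ℕ := conv (atMostParts (k+1)) (Wfun k) with hY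
      have hYrec : ∀ m, Y m = Ck k m + (if k+1 ≤ m then Y (m - (k+1)) else 0) := by
        intro m
        exact conv_rec_left (atMostParts (k+1)) (atMostParts k) (Wfun k) (k+1)
          (atMost_rec k) m
      have hCrec : ∀ m, Ck (k+1) m = Y m + (if k+1 ≤ m then Ck (k+1) (m - (k+1)) else 0) := by
        intro m
        exact conv_rec_right (atMostParts (k+1)) (Wfun (k+1)) (Wfun k) (k+1)
          (W_rec k · (by omega)) m
      have s1 : ∀ M, 21 * Y M ≤ ∑ m ∈ range (M + 2*k + 2), Y m :=
        step_cumsum (Ck k) Y (k+1) (2*k) (by omega) hYrec hstar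
      have s2 := step_cumsum Y (Ck (k+1)) (k+1) (2*k + 1) (by omega) hCrec
        (fun M => by
          rw [show M + (2*k+1) + 1 = M + 2*k + 2 by omega]
          exact s1 M)
      intro M
      rw [show M + 2*(k+1) + 1 = M + (2*k+1) + 2 by omega]
      exact s2 M

end GH

/-- For `k ≥ 4` and all `n ≥ 0`, `g_k(n) ≥ 21 · h_k(n)`. -/
theorem gCount_ge_21_hCount (k n : ℕ) (hk : 4 ≤ k) :
    21 * hCount k n ≤ gCount k n := by
  have hk1 : k ≠ 1 := by omega
  unfold hCount
  rw [if_neg hk1]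
  rw [GH.hSum_eq k n (by omega)]
  rcases le_or_gt (2*k) n with h | h
  · rw [if_pos h]
    have hstar := GH.star k hk (n - 2*k)
    rw [GH.gCount_eq k n (by omega)]
    calc 21 * GH.Ck k (n - 2*k) ≤ ∑ m ∈ Finset.range ((n - 2*k) + 2*k + 1), GH.Ck k m := hstar
    _ = ∑ m ∈ Finset.range (n+1), GH.Ck k m := by
        rw [show (n - 2*k) + 2*k + 1 = n + 1 by omega]
  · rw [if_neg (by omega), Nat.mul_zero]
    exact Nat.zero_le _
end

section
/- For every m ≥ 0, as formal power series in q, the product (1-q^{m+2})/((1-q^2)(1-q^3)) has nonnegative coefficients; consequently, for all k ≥ 4, the coefficients t_k(n) of Σ_{j=2}^{k} q^{2j}(1-q^{k-j+2})/((q^2;q)_{j-1}) satisfy t_k(n) ≥ 0 for all n ≥ 0. -/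
open PowerSeries Finset

namespace ChanMaoAux

noncomputable def g (a : ℕ) : PowerSeries ℚ := PowerSeries.mk fun n => if a ∣ n then 1 else 0

def NN (f : PowerSeries ℚ) : Prop := ∀ n, 0 ≤ coeff (R := ℚ) n f

lemma NN_g (a : ℕ) : NN (g a) := fun n => by
  simp only [g, coeff_mk]; split <;> norm_num

lemma NN.mul {f h : PowerSeries ℚ} (hf : NN f) (hh : NN h) : NN (f * h) := fun n => by
  rw [coeff_mul]
  exact Finset.sum_nonneg fun p _ => mul_nonneg (hf _) (hh _)

lemma NN_one : NN 1 := fun n => by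
  rw [coeff_one]; split <;> norm_num

lemma NN.X_pow_mul {f : PowerSeries ℚ} (hf : NN f) (a : ℕ) : NN (X ^ a * f) := fun n => by
  rw [coeff_X_pow_mul']
  split
  · exact hf _
  · exact le_refl 0

lemma NN.prod (s : Finset ℕ) (f : ℕ → PowerSeries ℚ) (h : ∀ i ∈ s, NN (f i)) :
    NN (∏ i ∈ s, f i) :=
  Finset.prod_induction f NN (fun _ _ ha hb => ha.mul hb) NN_one h

lemma one_sub_mul_coeff (t : ℕ) (f : PowerSeries ℚ) (n : ℕ) :
    coeff (R := ℚ) n ((1 - X ^ t) * f) = coeff (R := ℚ) n f - if t ≤ n then coeff (R := ℚ) (n - t) f else 0 := by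
  rw [sub_mul, one_mul, map_sub, coeff_X_pow_mul']

lemma g_mul {a : ℕ} (ha : 1 ≤ a) : ((1 : PowerSeries ℚ) - X ^ a) * g a = 1 := by
  ext n
  rw [one_sub_mul_coeff, coeff_one]
  simp only [g, coeff_mk]
  rcases Nat.eq_zero_or_pos n with rfl | hn
  · rw [if_pos (dvd_zero a), if_neg (show ¬ a ≤ 0 by omega), if_pos rfl]; ring
  · rw [if_neg (show ¬ n = 0 by omega)]
    by_cases hle : a ≤ n
    · rw [if_pos hle]
      by_cases hd : a ∣ n
      · rw [if_pos hd, if_pos (Nat.dvd_sub hd dvd_rfl)]; ring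
      · rw [if_neg hd, if_neg fun (hd2 : a ∣ n - a) => hd ((by omega : n - a + a = n) ▸ hd2.add dvd_rfl)]
        ring
    · rw [if_neg hle]
      by_cases hd : a ∣ n
      · exact absurd (Nat.le_of_dvd hn hd) hle
      · rw [if_neg hd]; ring

lemma const_one_sub (t : ℕ) (ht : 1 ≤ t) :
    constantCoeff (R := ℚ) (1 - X ^ t) = 1 := by
  simp [map_sub, map_pow, constantCoeff_X, zero_pow (by omega : t ≠ 0)]

lemma inv_prod (m : ℕ) :
    (∏ i ∈ range m, ((1 : PowerSeries ℚ) - X ^ (2 + i)))⁻¹ = ∏ i ∈ range m, g (2 + i) := by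
  rw [PowerSeries.inv_eq_iff_mul_eq_one, ← Finset.prod_mul_distrib]
  · exact Finset.prod_eq_one fun i _ => by rw [mul_comm]; exact g_mul (by omega)
  · rw [map_prod]
    rw [Finset.prod_eq_one fun i _ => const_one_sub _ (by omega)]
    norm_num

lemma inv23 : (((1 : PowerSeries ℚ) - X ^ 2) * (1 - X ^ 3))⁻¹ = g 2 * g 3 := by
  rw [PowerSeries.inv_eq_iff_mul_eq_one]
  · rw [show (g 2 * g 3) * ((1 - X ^ 2) * (1 - X ^ 3))
        = (((1 : PowerSeries ℚ) - X ^ 2) * g 2) * (((1 : PowerSeries ℚ) - X ^ 3) * g 3) by ring,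
      g_mul (by norm_num), g_mul (by norm_num), mul_one]
  · rw [map_mul, const_one_sub 2 (by norm_num), const_one_sub 3 (by norm_num)]
    norm_num


def sol (n : ℕ) : Finset (ℕ × ℕ) := (antidiagonal n).filter fun p => 2 ∣ p.1 ∧ 3 ∣ p.2

lemma mem_sol {n : ℕ} {p : ℕ × ℕ} : p ∈ sol n ↔ p.1 + p.2 = n ∧ 2 ∣ p.1 ∧ 3 ∣ p.2 := by
  simp [sol, Finset.mem_filter, Finset.mem_antidiagonal, and_assoc]

lemma coeff_g2g3 (n : ℕ) : coeff (R := ℚ) n (g 2 * g 3) = ((sol n).card : ℚ) := by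
  rw [coeff_mul]
  rw [show ∑ p ∈ antidiagonal n, coeff (R := ℚ) p.1 (g 2) * coeff (R := ℚ) p.2 (g 3)
      = ∑ p ∈ antidiagonal n, if 2 ∣ p.1 ∧ 3 ∣ p.2 then (1:ℚ) else 0 from
    Finset.sum_congr rfl fun p _ => by
      simp only [g, coeff_mk]; split_ifs <;> simp_all]
  rw [Finset.sum_boole]
  rfl

lemma sol_shift (n x y : ℕ) (hx : 2 ∣ x) (hy : 3 ∣ y) :
    (sol n).card ≤ (sol (n + (x + y))).card := by
  apply Finset.card_le_card_of_injOn (fun p => (p.1 + x, p.2 + y))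
  · intro p hp
    simp only [Finset.mem_coe, mem_sol] at hp ⊢
    exact ⟨by omega, hp.2.1.add hx, hp.2.2.add hy⟩
  · intro p _ q _ h
    have h1 := (Prod.ext_iff.mp h).1
    have h2 := (Prod.ext_iff.mp h).2
    simp only at h1 h2
    exact Prod.ext (by omega) (by omega)

lemma sol_card_mono {n d : ℕ} (hd : 2 ≤ d) : (sol n).card ≤ (sol (n + d)).card := by
  by_cases h2 : 2 ∣ d
  · have := sol_shift n d 0 h2 (dvd_zero 3)
    simpa using this
  · have := sol_shift n (d - 3) 3 (by omega) dvd_rfl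
    rw [show n + (d - 3 + 3) = n + d by omega] at this
    exact this

lemma sol_pos {m : ℕ} (hm : 2 ≤ m) : 1 ≤ (sol m).card := by
  rw [Nat.one_le_iff_ne_zero, ← Nat.pos_iff_ne_zero, Finset.card_pos]
  by_cases h2 : 2 ∣ m
  · exact ⟨(m, 0), mem_sol.mpr ⟨by omega, h2, dvd_zero 3⟩⟩
  · exact ⟨(m - 3, 3), mem_sol.mpr ⟨by omega, by omega, dvd_rfl⟩⟩

lemma sol_strict {a d : ℕ} (ha : 1 ≤ a) (hd2 : 2 ∣ d) (hd : a + 3 ≤ d) :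
    (sol a).card + 1 ≤ (sol (a + d)).card := by
  obtain ⟨b, rfl⟩ := hd2
  have hd2 : 2 ∣ 2 * b := ⟨b, rfl⟩
  set d := 2 * b with hdd
  obtain ⟨x, y, hxy, hx2, hy3, hxd⟩ : ∃ x y, x + y = a + d ∧ 2 ∣ x ∧ 3 ∣ y ∧ x < d := by
    rcases (by omega : (a + d) % 3 = 0 ∨ (a + d) % 3 = 1 ∨ (a + d) % 3 = 2) with h | h | h
    · exact ⟨0, a + d, by omega, ⟨0, rfl⟩, by omega, by omega⟩
    · have hd6 : 6 ≤ d := by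
        rcases Nat.lt_or_ge b 3 with hb | hb
        · have h2 : 2 ≤ b := by omega
          interval_cases b <;> omega
        · omega
      exact ⟨4, a + d - 4, by omega, by omega, by omega, by omega⟩
    · exact ⟨2, a + d - 2, by omega, by omega, by omega, by omega⟩
  have hinj : Set.InjOn (fun p : ℕ × ℕ => (p.1 + d, p.2)) (sol a) := by
    intro p _ q _ h
    have h1 := (Prod.ext_iff.mp h).1
    have h2 := (Prod.ext_iff.mp h).2
    simp only at h1 h2
    exact Prod.ext (by omega) h2
  have hnot : (x, y) ∉ (sol a).image (fun p => (p.1 + d, p.2)) := by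
    intro h
    obtain ⟨q, _, hq⟩ := Finset.mem_image.mp h
    have := (Prod.ext_iff.mp hq).1
    simp only at this
    omega
  have hsub : insert (x, y) ((sol a).image (fun p => (p.1 + d, p.2))) ⊆ sol (a + d) := by
    intro p hp
    rcases Finset.mem_insert.mp hp with rfl | hp
    · exact mem_sol.mpr ⟨hxy, hx2, hy3⟩
    · obtain ⟨q, hq, rfl⟩ := Finset.mem_image.mp hp
      rw [mem_sol] at hq ⊢
      exact ⟨by omega, hq.2.1.add hd2, hq.2.2⟩
  calc (sol a).card + 1 = ((sol a).image (fun p => (p.1 + d, p.2))).card + 1 := by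
        rw [Finset.card_image_of_injOn hinj]
    _ = (insert (x, y) ((sol a).image (fun p => (p.1 + d, p.2)))).card :=
        (Finset.card_insert_of_notMem hnot).symm
    _ ≤ (sol (a + d)).card := Finset.card_le_card hsub

lemma part1core {t : ℕ} (ht : 2 ≤ t) : NN ((1 - X ^ t) * (g 2 * g 3)) := by
  intro n
  rw [one_sub_mul_coeff]
  split_ifs with h
  · rw [coeff_g2g3, coeff_g2g3, sub_nonneg, Nat.cast_le]
    have := sol_card_mono (n := n - t) (d := t) ht
    rwa [Nat.sub_add_cancel h] at this
  · rw [coeff_g2g3, sub_zero]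
    positivity


noncomputable def F (k j : ℕ) : PowerSeries ℚ :=
  X ^ (2 * j) * (1 - X ^ (k - j + 2)) * ∏ i ∈ range (j - 1), g (2 + i)

lemma prod_g_split {m : ℕ} (hm : 2 ≤ m) :
    ∏ i ∈ range m, g (2 + i) = g 2 * g 3 * ∏ i ∈ Ico 2 m, g (2 + i) := by
  rw [Finset.range_eq_Ico, Finset.prod_eq_prod_Ico_succ_bot (by omega : 0 < m),
      Finset.prod_eq_prod_Ico_succ_bot (by omega : 1 < m)]
  norm_num [mul_assoc]

lemma NN_term {k j : ℕ} (hj : 3 ≤ j) (ht : 2 ≤ k - j + 2) : NN (F k j) := by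
  unfold F
  rw [prod_g_split (by omega), show X ^ (2 * j) * (1 - X ^ (k - j + 2)) *
      (g 2 * g 3 * ∏ i ∈ Ico 2 (j - 1), g (2 + i))
    = X ^ (2 * j) * (((1 - X ^ (k - j + 2)) * (g 2 * g 3)) * ∏ i ∈ Ico 2 (j - 1), g (2 + i))
      by ring]
  exact ((part1core ht).mul (NN.prod _ _ fun i _ => NN_g _)).X_pow_mul _

lemma NN_even_g2 {t : ℕ} (h2 : 2 ∣ t) : NN ((1 - X ^ t) * g 2) := by
  intro n
  rw [one_sub_mul_coeff]
  simp only [g, coeff_mk]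
  split_ifs <;> simp_all <;> omega

lemma one_le_coeff_mul {f h : PowerSeries ℚ} {i j n : ℕ} (hf : NN f) (hh : NN h)
    (hi : 1 ≤ coeff (R := ℚ) i f) (hj : 1 ≤ coeff (R := ℚ) j h) (hn : i + j = n) :
    1 ≤ coeff (R := ℚ) n (f * h) := by
  subst hn
  rw [coeff_mul]
  have h1 : (1 : ℚ) ≤ coeff (R := ℚ) i f * coeff (R := ℚ) j h := by
    have := mul_le_mul hi hj zero_le_one (le_trans zero_le_one hi)
    simpa using this
  have h2 : coeff (R := ℚ) i f * coeff (R := ℚ) j h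
      ≤ ∑ p ∈ antidiagonal (i + j), coeff (R := ℚ) p.1 f * coeff (R := ℚ) p.2 h :=
    Finset.single_le_sum (f := fun p : ℕ × ℕ => coeff (R := ℚ) p.1 f * coeff (R := ℚ) p.2 h)
      (fun p _ => mul_nonneg (hf _) (hh _)) (a := (i, j)) (Finset.HasAntidiagonal.mem_antidiagonal.mpr rfl)
  linarith

lemma coeff_g_of_dvd {a m : ℕ} (h : a ∣ m) : coeff (R := ℚ) m (g a) = 1 := by
  simp [g, coeff_mk, h]

lemma coeff_zero_prod_g (s : Finset ℕ) (f : ℕ → ℕ) :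
    coeff (R := ℚ) 0 (∏ i ∈ s, g (f i)) = 1 := by
  rw [coeff_zero_eq_constantCoeff, map_prod]
  exact Finset.prod_eq_one fun i _ => by
    rw [← coeff_zero_eq_constantCoeff_apply, coeff_g_of_dvd (dvd_zero _)]

lemma pm_eq : ((1 : PowerSeries ℚ) - X) * g 2 = PowerSeries.mk fun n => (-1 : ℚ) ^ n := by
  have : ((1 : PowerSeries ℚ) - X) = 1 - X ^ 1 := by rw [pow_one]
  rw [this]
  ext n
  rw [one_sub_mul_coeff, coeff_mk]
  simp only [g, coeff_mk]
  rcases Nat.even_or_odd n with he | ho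
  · have h2 : n % 2 = 0 := Nat.even_iff.mp he
    rw [he.neg_one_pow, if_pos (by omega : 2 ∣ n)]
    rcases Nat.eq_zero_or_pos n with rfl | hn
    · rw [if_neg (by omega)]; norm_num
    · rw [if_pos (by omega : 1 ≤ n), if_neg (by omega : ¬ 2 ∣ n - 1)]; norm_num
  · have h2 : n % 2 = 1 := Nat.odd_iff.mp ho
    rw [ho.neg_one_pow, if_neg (by omega : ¬ 2 ∣ n), if_pos (by omega : 1 ≤ n),
      if_pos (by omega : 2 ∣ n - 1)]
    norm_num


lemma F3_eq {k : ℕ} (hk : 5 ≤ k) : F k 3 = X ^ 6 * ((1 - X ^ (k - 1)) * (g 2 * g 3)) := by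
  unfold F
  rw [show k - 3 + 2 = k - 1 by omega, Finset.prod_range_succ, Finset.prod_range_one,
    show (2:ℕ) + 0 = 2 from rfl, show (2:ℕ) + 1 = 3 from rfl]
  ring

lemma coeff_F3 {k n : ℕ} (hk : 5 ≤ k) (hn : 6 ≤ n) :
    coeff (R := ℚ) n (F k 3) = ((sol (n - 6)).card : ℚ)
      - if k + 5 ≤ n then ((sol (n - k - 5)).card : ℚ) else 0 := by
  rw [F3_eq hk, coeff_X_pow_mul', if_pos hn, one_sub_mul_coeff, coeff_g2g3]
  congr 1
  by_cases h : k + 5 ≤ n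
  · rw [if_pos (by omega : k - 1 ≤ n - 6), if_pos h, coeff_g2g3,
      show n - 6 - (k - 1) = n - k - 5 by omega]
  · rw [if_neg (by omega), if_neg h]

lemma Fk_eq {k : ℕ} (hk : 5 ≤ k) :
    F k k = X ^ (2 * k) * (g 3 * (g 4 * (g 5 * ∏ i ∈ Ico 4 (k - 1), g (2 + i)))) := by
  unfold F
  rw [show k - k + 2 = 2 by omega, Finset.range_eq_Ico,
    Finset.prod_eq_prod_Ico_succ_bot (by omega : 0 < k - 1),
    Finset.prod_eq_prod_Ico_succ_bot (by omega : 1 < k - 1),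
    Finset.prod_eq_prod_Ico_succ_bot (by omega : 2 < k - 1),
    Finset.prod_eq_prod_Ico_succ_bot (by omega : 3 < k - 1),
    show (2:ℕ) + 0 = 2 from rfl, show (2:ℕ) + 1 = 3 from rfl,
    show (2:ℕ) + 2 = 4 from rfl, show (2:ℕ) + 3 = 5 from rfl]
  rw [show X ^ (2 * k) * (1 - X ^ 2) *
        (g 2 * (g 3 * (g 4 * (g 5 * ∏ i ∈ Ico 4 (k - 1), g (2 + i)))))
      = X ^ (2 * k) * (((1 - X ^ 2) * g 2) *
        (g 3 * (g 4 * (g 5 * ∏ i ∈ Ico 4 (k - 1), g (2 + i))))) from by ring,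
    g_mul (by norm_num), one_mul]

lemma one_le_coeff_Fk {k n : ℕ} (hk : 5 ≤ k) (hn : 2 * k + 3 ≤ n) :
    1 ≤ coeff (R := ℚ) n (F k k) := by
  rw [Fk_eq hk, coeff_X_pow_mul', if_pos (by omega)]
  have hN3 : 3 ≤ n - 2 * k := by omega
  set N := n - 2 * k with hN
  have NNR : NN (∏ i ∈ Ico 4 (k - 1), g (2 + i)) := NN.prod _ _ fun i _ => NN_g _
  have NN5 : NN (g 5 * ∏ i ∈ Ico 4 (k - 1), g (2 + i)) := (NN_g 5).mul NNR
  have NN4 : NN (g 4 * (g 5 * ∏ i ∈ Ico 4 (k - 1), g (2 + i))) := (NN_g 4).mul NN5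
  have hR : 1 ≤ coeff (R := ℚ) 0 (∏ i ∈ Ico 4 (k - 1), g (2 + i)) := (coeff_zero_prod_g _ _).ge
  have h50 : 1 ≤ coeff (R := ℚ) 0 (g 5 * ∏ i ∈ Ico 4 (k - 1), g (2 + i)) :=
    one_le_coeff_mul (NN_g 5) NNR (coeff_g_of_dvd (dvd_zero 5)).ge hR rfl
  rcases (by omega : N % 3 = 0 ∨ N % 3 = 1 ∨ N % 3 = 2) with h | h | h
  · have hd0 : (3:ℕ) ∣ N := by omega
    refine one_le_coeff_mul (NN_g 3) NN4 (i := N) (j := 0) (coeff_g_of_dvd hd0).ge ?_ (by omega)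
    exact one_le_coeff_mul (NN_g 4) NN5 (coeff_g_of_dvd (dvd_zero 4)).ge h50 rfl
  · have hd1 : (3:ℕ) ∣ N - 4 := by omega
    refine one_le_coeff_mul (NN_g 3) NN4 (i := N - 4) (j := 4)
      (coeff_g_of_dvd hd1).ge ?_ (by omega)
    exact one_le_coeff_mul (NN_g 4) NN5 (coeff_g_of_dvd dvd_rfl).ge h50 rfl
  · have hd2 : (3:ℕ) ∣ N - 5 := by omega
    refine one_le_coeff_mul (NN_g 3) NN4 (i := N - 5) (j := 5)
      (coeff_g_of_dvd hd2).ge ?_ (by omega)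
    refine one_le_coeff_mul (NN_g 4) NN5 (i := 0) (j := 5)
      (coeff_g_of_dvd (dvd_zero 4)).ge ?_ rfl
    exact one_le_coeff_mul (NN_g 5) NNR (coeff_g_of_dvd dvd_rfl).ge hR rfl

lemma coeff_rho (k n : ℕ) :
    coeff (R := ℚ) n (X ^ (k + 3) * ((1 - X) * g 2))
      = if k + 3 ≤ n then (-1 : ℚ) ^ (n - (k + 3)) else 0 := by
  rw [pm_eq, coeff_X_pow_mul']
  split_ifs <;> simp [coeff_mk]

lemma key {k : ℕ} (hk : 5 ≤ k) (hko : ¬ 2 ∣ k) (n : ℕ) :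
    0 ≤ coeff (R := ℚ) n (F k 3) + coeff (R := ℚ) n (F k k)
      + coeff (R := ℚ) n (X ^ (k + 3) * ((1 - X) * g 2)) := by
  have hF3 : NN (F k 3) := NN_term (by omega) (by omega)
  have hFk : NN (F k k) := NN_term (by omega) (by omega)
  rw [coeff_rho]
  split_ifs with hn
  · rcases Nat.even_or_odd (n - (k + 3)) with he | ho
    · rw [he.neg_one_pow]
      have := hF3 n; have := hFk n; linarith
    · rw [ho.neg_one_pow]
      have hodd : (n - (k + 3)) % 2 = 1 := Nat.odd_iff.mp ho
      by_cases hbig : 2 * k + 3 ≤ n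
      · have h1 := one_le_coeff_Fk hk hbig
        have := hF3 n
        linarith
      · have hn6 : 6 ≤ n := by omega
        rw [coeff_F3 hk hn6]
        by_cases h5 : k + 5 ≤ n
        · have ha : 1 ≤ n - k - 5 := by omega
          have hstrict := sol_strict ha (by omega : 2 ∣ k - 1)
            (by omega : (n - k - 5) + 3 ≤ k - 1)
          rw [show n - k - 5 + (k - 1) = n - 6 by omega] at hstrict
          have hcast : ((sol (n - k - 5)).card : ℚ) + 1 ≤ ((sol (n - 6)).card : ℚ) := by
            exact_mod_cast hstrict
          rw [if_pos h5]
          have := hFk n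
          linarith
        · rw [if_neg h5]
          have hpos : 1 ≤ (sol (n - 6)).card := sol_pos (by omega)
          have hcast : (1 : ℚ) ≤ ((sol (n - 6)).card : ℚ) := by exact_mod_cast hpos
          have := hFk n
          linarith
  · have := hF3 n; have := hFk n; linarith

lemma F2_split {k : ℕ} (hk : 5 ≤ k) :
    F k 2 = X ^ 4 * ((1 - X ^ (k - 1)) * g 2) + X ^ (k + 3) * ((1 - X) * g 2) := by
  obtain ⟨m, rfl⟩ : ∃ m, k = m + 5 := ⟨k - 5, by omega⟩
  unfold F
  rw [show m + 5 - 2 + 2 = m + 5 by omega, show m + 5 - 1 = m + 4 by omega,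
    show m + 5 + 3 = m + 8 by omega, Finset.prod_range_one,
    show (2:ℕ) + 0 = 2 from rfl, show 2 * 2 = 4 from rfl]
  ring

lemma part2 {k : ℕ} (hk : 4 ≤ k) (n : ℕ) :
    0 ≤ coeff (R := ℚ) n (∑ j ∈ Icc 2 k, X ^ (2 * j) * (1 - X ^ (k - j + 2)) *
      (∏ i ∈ range (j - 1), ((1 : PowerSeries ℚ) - X ^ (2 + i)))⁻¹) := by
  rw [Finset.sum_congr rfl fun j (_ : j ∈ Icc 2 k) =>
    (by rw [inv_prod]; rfl : X ^ (2 * j) * (1 - X ^ (k - j + 2)) *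
      (∏ i ∈ range (j - 1), ((1 : PowerSeries ℚ) - X ^ (2 + i)))⁻¹ = F k j)]
  by_cases hke : 2 ∣ k
  · rw [map_sum]
    apply Finset.sum_nonneg
    intro j hj
    rw [Finset.mem_Icc] at hj
    rcases eq_or_lt_of_le hj.1 with rfl | h3
    · have h2 : F k 2 = X ^ (2 * 2) * ((1 - X ^ k) * g 2) := by
        unfold F
        rw [show k - 2 + 2 = k by omega, Finset.prod_range_one,
          show (2:ℕ) + 0 = 2 from rfl]
        ring
      rw [h2]
      exact (NN_even_g2 hke).X_pow_mul _ n
    · exact NN_term (by omega) (by omega) n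
  · have hk5 : 5 ≤ k := by omega
    have hsplit : Icc 2 k = insert 2 (insert 3 (insert k (Icc 4 (k - 1)))) := by
      ext x
      simp only [Finset.mem_Icc, Finset.mem_insert]
      omega
    rw [hsplit, Finset.sum_insert (by simp only [Finset.mem_insert, Finset.mem_Icc]; omega),
      Finset.sum_insert (by simp only [Finset.mem_insert, Finset.mem_Icc]; omega),
      Finset.sum_insert (by simp only [Finset.mem_Icc]; omega),
      F2_split hk5, map_add, map_add, map_add, map_add, map_sum]
    have h1 : 0 ≤ coeff (R := ℚ) n (X ^ 4 * ((1 - X ^ (k - 1)) * g 2)) :=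
      (NN_even_g2 (by omega)).X_pow_mul _ n
    have h2 := key hk5 hke n
    have h3 : 0 ≤ ∑ j ∈ Icc 4 (k - 1), coeff (R := ℚ) n (F k j) :=
      Finset.sum_nonneg fun j hj =>
        NN_term (by rw [Finset.mem_Icc] at hj; omega) (by omega) n
    linarith

end ChanMaoAux

/-- For every `m ≥ 0`, the formal power series `(1-q^{m+2})/((1-q²)(1-q³))` has
nonnegative coefficients; consequently, for `k ≥ 4`, all coefficients of
`Σ_{j=2}^{k} q^{2j}(1-q^{k-j+2})/((q²;q)_{j-1})` are nonnegative. -/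
theorem chanMao_nonneg :
    (∀ m n : ℕ,
      0 ≤ coeff (R := ℚ) n ((1 - X ^ (m + 2)) * ((1 - X ^ 2) * (1 - X ^ 3))⁻¹)) ∧
    (∀ k : ℕ, 4 ≤ k → ∀ n : ℕ,
      0 ≤ coeff (R := ℚ) n (∑ j ∈ Icc 2 k,
        X ^ (2 * j) * (1 - X ^ (k - j + 2)) *
          (∏ i ∈ range (j - 1), (1 - X ^ (2 + i)))⁻¹)) := by
  constructor
  · intro m n
    rw [ChanMaoAux.inv23]
    exact ChanMaoAux.part1core (by omega) n
  · intro k hk n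
    exact ChanMaoAux.part2 hk n
end
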